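/- For fractionally integrated noise F(d) with d ∈ (0,1/2) and all integers 1 ≤ j ≤ k: a_j − a_{j,k} ≤ (−a_j) · exp( d · Σ_{m=0}^{j−1} 1/(k−d−m) ). -/

import Mathlib

open scoped BigOperators

/-- AR(∞) coefficients of fractionally integrated noise F(d):
`a_j = Γ(j-d)/(Γ(j+1)Γ(-d))` for `j ≥ 1` (and `a_0 = 1`). -/
noncomputable def fiAR (d : ℝ) (j : ℕ) : ℝ :=
  if j = 0 then 1
  else Real.Gamma ((j : ℝ) - d) / (Real.Gamma ((j : ℝ) + 1) * Real.Gamma (-d))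

/-- Signed Yule–Walker AR(k) coefficients of F(d), for `1 ≤ j ≤ k`:
`a_{j,k} = Γ(k+1)Γ(j-d)Γ(k-d-j+1)/(Γ(k-j+1)Γ(j+1)Γ(-d)Γ(k-d+1))`. -/
noncomputable def fiYW (d : ℝ) (j k : ℕ) : ℝ :=
  Real.Gamma ((k : ℝ) + 1) * Real.Gamma ((j : ℝ) - d) * Real.Gamma ((k : ℝ) - d - (j : ℝ) + 1) /
    (Real.Gamma ((k : ℝ) - (j : ℝ) + 1) * Real.Gamma ((j : ℝ) + 1) * Real.Gamma (-d) *
      Real.Gamma ((k : ℝ) - d + 1))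

/-- Gamma shift product formula: `Γ(c+1) = Γ(c-j+1) ∏_{m<j} (c-m)` when `c - j + 1 > 0`. -/
lemma gamma_shift_prod (c : ℝ) : ∀ j : ℕ, 0 < c - j + 1 →
    Real.Gamma (c + 1) = Real.Gamma (c - j + 1) * ∏ m ∈ Finset.range j, (c - m) := by
  intro j
  induction j with
  | zero => intro _; simp
  | succ j ih =>
    intro h
    have hc : (0:ℝ) < c - j := by push_cast at h; linarith
    have h' : 0 < c - j + 1 := by linarith
    have e1 : c - (j:ℝ) + 1 = (c - ((j:ℕ):ℝ) - 1 + 1) + 1 := by ring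
    have e2 : c - (((j+1:ℕ)):ℝ) + 1 = c - (j:ℝ) := by push_cast; ring
    rw [ih h', Finset.prod_range_succ, e2]
    have := Real.Gamma_add_one (ne_of_gt hc)
    rw [show c - (j:ℝ) + 1 = (c - (j:ℝ)) + 1 by ring] at *
    rw [this]
    ring

theorem fiYW_difference_exp_bound
    (d : ℝ) (hd : 0 < d) (hd' : d < 1 / 2)
    (j k : ℕ) (hj : 1 ≤ j) (hjk : j ≤ k) :
    fiAR d j - fiYW d j k ≤
      (-(fiAR d j)) * Real.exp (d * ∑ m ∈ Finset.range j, 1 / ((k : ℝ) - d - m)) := by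
  have hjk' : (j:ℝ) ≤ (k:ℝ) := by exact_mod_cast hjk
  have hj1 : (1:ℝ) ≤ (j:ℝ) := by exact_mod_cast hj
  -- positivity facts for each m < j
  have hden : ∀ m ∈ Finset.range j, (0:ℝ) < (k:ℝ) - d - m := by
    intro m hm
    have hm' : (m:ℝ) ≤ (j:ℝ) - 1 := by
      have := Finset.mem_range.mp hm
      have : (m:ℝ) + 1 ≤ (j:ℝ) := by exact_mod_cast this
      linarith
    linarith
  -- Gamma factorizations
  have hg1 : Real.Gamma ((k:ℝ) + 1) =
      Real.Gamma ((k:ℝ) - j + 1) * ∏ m ∈ Finset.range j, ((k:ℝ) - m) := by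
    apply gamma_shift_prod
    linarith
  have hg2 : Real.Gamma ((k:ℝ) - d + 1) =
      Real.Gamma ((k:ℝ) - d - j + 1) * ∏ m ∈ Finset.range j, ((k:ℝ) - d - m) := by
    have := gamma_shift_prod ((k:ℝ) - d) j (by linarith)
    convert this using 3
  -- sign facts for the Gammas
  have hGneg : Real.Gamma (-d) < 0 := by
    have h1 : Real.Gamma (1 - d) > 0 := Real.Gamma_pos_of_pos (by linarith)
    have := Real.Gamma_add_one (neg_ne_zero.mpr (ne_of_gt hd))
    rw [show -d + 1 = 1 - d by ring] at this
    nlinarith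
  have hGjd : 0 < Real.Gamma ((j:ℝ) - d) := Real.Gamma_pos_of_pos (by linarith)
  have hGj1 : 0 < Real.Gamma ((j:ℝ) + 1) := Real.Gamma_pos_of_pos (by linarith)
  have hGkj : 0 < Real.Gamma ((k:ℝ) - j + 1) := Real.Gamma_pos_of_pos (by linarith)
  have hGkdj : 0 < Real.Gamma ((k:ℝ) - d - j + 1) := Real.Gamma_pos_of_pos (by linarith)
  have hProdPos : (0:ℝ) < ∏ m ∈ Finset.range j, ((k:ℝ) - d - m) :=
    Finset.prod_pos hden
  -- unfold fiAR
  have hjne : j ≠ 0 := by omega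
  have haj : fiAR d j = Real.Gamma ((j:ℝ) - d) / (Real.Gamma ((j:ℝ) + 1) * Real.Gamma (-d)) := by
    simp [fiAR, hjne]
  have hajneg : fiAR d j < 0 := by
    rw [haj]
    exact div_neg_of_pos_of_neg hGjd (mul_neg_of_pos_of_neg hGj1 hGneg)
  -- fiYW = fiAR * P, where P = ∏ (k-m)/(k-d-m)
  set P : ℝ := ∏ m ∈ Finset.range j, (((k:ℝ) - m) / ((k:ℝ) - d - m)) with hP
  have hPeq : P = (∏ m ∈ Finset.range j, ((k:ℝ) - m)) /
      (∏ m ∈ Finset.range j, ((k:ℝ) - d - m)) := by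
    rw [hP, Finset.prod_div_distrib]
  have hYW : fiYW d j k = fiAR d j * P := by
    rw [fiYW, haj, hg1, hg2, hPeq]
    field_simp [hGkj.ne', hGkdj.ne', hGj1.ne', hGneg.ne, hProdPos.ne']
  -- P ≤ exp of the sum
  have hPle : P ≤ Real.exp (d * ∑ m ∈ Finset.range j, 1 / ((k:ℝ) - d - m)) := by
    rw [Finset.mul_sum, Real.exp_sum]
    apply Finset.prod_le_prod
    · intro m hm
      have h := hden m hm
      have hk : (0:ℝ) < (k:ℝ) - m := by linarith
      positivity
    · intro m hm
      have h := hden m hm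
      have e : ((k:ℝ) - m) / ((k:ℝ) - d - m) = 1 + d / ((k:ℝ) - d - m) := by
        field_simp
        ring
      rw [e, show d * (1 / ((k:ℝ) - d - m)) = d / ((k:ℝ) - d - m) by ring]
      linarith [Real.add_one_le_exp (d / ((k:ℝ) - d - m))]
  have hPpos : 0 < P := Finset.prod_pos (fun m hm => by
    have h := hden m hm
    have hk : (0:ℝ) < (k:ℝ) - m := by linarith
    positivity)
  rw [hYW]
  nlinarith [mul_le_mul_of_nonneg_left hPle (neg_nonneg.mpr hajneg.le)]
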